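/- For every integer d ≥ 1 and all real numbers μ > 0 and β > d+1, there exists a constant K > 0 such that for all x, y ∈ ℤ^d, ∑_{z ∈ ℤ^d} f(x,z)·f(z,y) ≤ K·f(x,y), where f(u,v) = exp(−μ·‖u−v‖₁)·(1+‖u−v‖₁)^{−β}; in particular the sum on the left-hand side converges. That is, f is a reproducing function on ℤ^d. -/

import Mathlib

open Real Finset

set_option maxHeartbeats 1000000

private lemma aux_pi_prod_summable {h : ℤ → ℝ} (h0 : ∀ k, 0 ≤ h k) (hs : Summable h) :
    ∀ d : ℕ, Summable (fun z : Fin d → ℤ => ∏ i, h (z i)) := by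
  intro d
  induction d with
  | zero =>
      have : (fun z : Fin 0 → ℤ => ∏ i, h (z i)) = fun _ => 1 := by
        funext z; simp
      rw [this]
      exact Summable.of_finite
  | succ n ih =>
      have key : Summable (fun p : ℤ × (Fin n → ℤ) => h p.1 * ∏ i, h (p.2 i)) := by
        apply Summable.mul_of_nonneg hs ih
        · exact fun k => h0 k
        · exact fun z => Finset.prod_nonneg fun i _ => h0 _
      have h2 : Summable ((fun p : ℤ × (Fin n → ℤ) => h p.1 * ∏ i, h (p.2 i)) ∘
          (Fin.consEquiv fun _ => ℤ).symm) := (Equiv.summable_iff _).2 key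
      refine h2.congr fun z => ?_
      simp [Fin.prod_univ_succ, Function.comp, Fin.tail]

private lemma aux_one_dim_summable {p : ℝ} (hp : 1 < p) :
    Summable (fun k : ℤ => (1 + |(k : ℝ)|) ^ (-p)) := by
  have h1 : Summable (fun n : ℕ => ((n : ℝ)) ^ (-p)) :=
    Real.summable_nat_rpow.mpr (by linarith)
  have hnat : Summable (fun n : ℕ => (1 + (n : ℝ)) ^ (-p)) := by
    have h2 := (summable_nat_add_iff 1).mpr h1
    refine h2.congr fun n => ?_
    push_cast
    ring_nf
  refine Summable.of_nat_of_neg (hnat.congr fun n => ?_) (hnat.congr fun n => ?_) <;>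
    simp

private lemma aux_key_poly_one {β n m N : ℝ} (hβ : 0 ≤ β) (hn : 0 ≤ n) (hm : 0 ≤ m)
    (hN : 0 ≤ N) (h2m : N ≤ 2 * m) :
    (1 + n) ^ (-β) * (1 + m) ^ (-β) ≤
      2 ^ β * (1 + N) ^ (-β) * ((1 + n) ^ (-β) + (1 + m) ^ (-β)) := by
  have hNpos : (0:ℝ) < 1 + N := by linarith
  have hhalf : (1 + N) / 2 ≤ 1 + m := by linarith
  have hmB : (1 + m) ^ (-β) ≤ ((1 + N) / 2) ^ (-β) :=
    Real.rpow_le_rpow_of_nonpos (by linarith) hhalf (neg_nonpos.mpr hβ)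
  have heq : ((1 + N) / 2) ^ (-β) = 2 ^ β * (1 + N) ^ (-β) := by
    rw [Real.div_rpow hNpos.le (by norm_num), Real.rpow_neg (by norm_num : (0:ℝ) ≤ 2)]
    field_simp
  have hnB : (0:ℝ) ≤ (1 + n) ^ (-β) := Real.rpow_nonneg (by linarith) _
  have hmB' : (0:ℝ) ≤ (1 + m) ^ (-β) := Real.rpow_nonneg (by linarith) _
  have h2 : (1 + n) ^ (-β) * (1 + m) ^ (-β) ≤ (1 + n) ^ (-β) * (2 ^ β * (1 + N) ^ (-β)) := by
    rw [heq] at hmB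
    exact mul_le_mul_of_nonneg_left hmB hnB
  refine h2.trans ?_
  have hc : (0:ℝ) ≤ 2 ^ β * (1 + N) ^ (-β) :=
    mul_nonneg (Real.rpow_nonneg (by norm_num) _) (Real.rpow_nonneg hNpos.le _)
  nlinarith [mul_nonneg hc hmB']

private lemma aux_key_poly {β n m N : ℝ} (hβ : 0 ≤ β) (hn : 0 ≤ n) (hm : 0 ≤ m)
    (hN : 0 ≤ N) (htri : N ≤ n + m) :
    (1 + n) ^ (-β) * (1 + m) ^ (-β) ≤
      2 ^ β * (1 + N) ^ (-β) * ((1 + n) ^ (-β) + (1 + m) ^ (-β)) := by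
  rcases le_total n m with h | h
  · exact aux_key_poly_one hβ hn hm hN (by linarith)
  · have := aux_key_poly_one hβ hm hn hN (by linarith)
    linarith [this]

/-- For `d ≥ 1`, `μ > 0`, `β > d+1`, the function
`f(u,v) = exp(−μ‖u−v‖₁)·(1+‖u−v‖₁)^{−β}` on `ℤ^d` is reproducing: there is `K > 0` with
`∑_z f(x,z)·f(z,y) ≤ K·f(x,y)` for all `x, y` (and in particular the sum converges). -/
theorem stmt_5 (d : ℕ) (hd : 1 ≤ d) (μ β : ℝ) (hμ : 0 < μ) (hβ : (d : ℝ) + 1 < β)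
    (f : (Fin d → ℤ) → (Fin d → ℤ) → ℝ)
    (hf : ∀ u v, f u v =
      Real.exp (-μ * ((∑ i, |u i - v i| : ℤ) : ℝ)) *
        (1 + ((∑ i, |u i - v i| : ℤ) : ℝ)) ^ (-β)) :
    ∃ K > 0, ∀ x y : Fin d → ℤ,
      Summable (fun z : Fin d → ℤ => f x z * f z y) ∧
      (∑' z : Fin d → ℤ, f x z * f z y) ≤ K * f x y := by
  have hd0 : (0:ℝ) < d := by exact_mod_cast Nat.lt_of_lt_of_le Nat.zero_lt_one hd
  have hβ0 : (0:ℝ) ≤ β := by linarith [hd0]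
  set p : ℝ := β / d with hp_def
  have hp : 1 < p := by
    rw [hp_def, lt_div_iff₀ hd0]
    linarith
  -- the majorant g and its summability
  set g : (Fin d → ℤ) → ℝ := fun z => (1 + ((∑ i, |z i| : ℤ) : ℝ)) ^ (-β) with hg_def
  have hg_nonneg : ∀ z, 0 ≤ g z := by
    intro z
    apply Real.rpow_nonneg
    have : (0:ℤ) ≤ ∑ i, |z i| := Finset.sum_nonneg fun i _ => abs_nonneg _
    have : (0:ℝ) ≤ ((∑ i, |z i| : ℤ) : ℝ) := by exact_mod_cast this
    linarith
  have hG : Summable (fun z : Fin d → ℤ => ∏ i, (1 + |((z i : ℤ) : ℝ)|) ^ (-p)) :=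
    aux_pi_prod_summable (fun k => Real.rpow_nonneg (by positivity) _)
      (aux_one_dim_summable hp) d
  have hgG : ∀ z : Fin d → ℤ, g z ≤ ∏ i, (1 + |((z i : ℤ) : ℝ)|) ^ (-p) := by
    intro z
    have hS : ((∑ i, |z i| : ℤ) : ℝ) = ∑ i, |((z i : ℤ) : ℝ)| := by push_cast; rfl
    set S : ℝ := ((∑ i, |z i| : ℤ) : ℝ) with hS_def
    have hS0 : 0 ≤ S := by
      rw [hS]; exact Finset.sum_nonneg fun i _ => abs_nonneg _
    have hfac : ∀ i : Fin d, (0:ℝ) < 1 + |((z i : ℤ) : ℝ)| := fun i => by positivity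
    have hprodpos : (0:ℝ) < ∏ i, (1 + |((z i : ℤ) : ℝ)|) :=
      Finset.prod_pos fun i _ => hfac i
    have hPle : (∏ i, (1 + |((z i : ℤ) : ℝ)|)) ≤ (1 + S) ^ d := by
      have h1 : (∏ i : Fin d, (1 + |((z i : ℤ) : ℝ)|)) ≤ ∏ _i : Fin d, (1 + S) := by
        refine Finset.prod_le_prod (fun i _ => (hfac i).le) (fun i _ => ?_)
        have : |((z i : ℤ) : ℝ)| ≤ S := by
          rw [hS]
          exact Finset.single_le_sum (f := fun j : Fin d => |((z j : ℤ) : ℝ)|) (fun j _ => abs_nonneg _) (Finset.mem_univ i)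
        linarith
      simpa using h1
    have hprod_rpow : (∏ i, (1 + |((z i : ℤ) : ℝ)|) ^ (-p))
        = (∏ i, (1 + |((z i : ℤ) : ℝ)|)) ^ (-p) := by
      rw [← Real.finset_prod_rpow _ _ (fun i _ => (hfac i).le)]
    have hpow : ((1 + S) ^ d : ℝ) = (1 + S) ^ (d : ℝ) := by
      rw [Real.rpow_natCast]
    have hβp : (d : ℝ) * (-p) = -β := by
      rw [hp_def]
      field_simp
    have hgz : g z = ((1 + S) ^ d : ℝ) ^ (-p) := by
      rw [hpow, ← Real.rpow_mul (by linarith), hβp]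
    rw [hgz, hprod_rpow]
    exact Real.rpow_le_rpow_of_nonpos hprodpos hPle (neg_nonpos.mpr (by linarith))
  have hg_summable : Summable g :=
    Summable.of_nonneg_of_le hg_nonneg hgG hG
  set C : ℝ := ∑' z, g z with hC_def
  have hC0 : 0 ≤ C := tsum_nonneg hg_nonneg
  have h2β : (0:ℝ) < 2 ^ β := Real.rpow_pos_of_pos (by norm_num) _
  refine ⟨2 ^ β * (2 * C + 1), by positivity, fun x y => ?_⟩
  -- nonnegativity and notation
  have hf_nonneg : ∀ u v, 0 ≤ f u v := by
    intro u v; rw [hf]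
    have : (0:ℤ) ≤ ∑ i, |u i - v i| := Finset.sum_nonneg fun i _ => abs_nonneg _
    have h' : (0:ℝ) ≤ ((∑ i, |u i - v i| : ℤ) : ℝ) := by exact_mod_cast this
    positivity
  have hNnn : ∀ u v : Fin d → ℤ, (0:ℝ) ≤ ((∑ i, |u i - v i| : ℤ) : ℝ) := by
    intro u v
    have : (0:ℤ) ≤ ∑ i, |u i - v i| := Finset.sum_nonneg fun i _ => abs_nonneg _
    exact_mod_cast this
  -- pointwise bound
  have hbound : ∀ z, f x z * f z y ≤ (2 ^ β * f x y) * (g (x - z) + g (z - y)) := by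
    intro z
    have htriZ : (∑ i, |x i - y i| : ℤ) ≤ (∑ i, |x i - z i|) + ∑ i, |z i - y i| := by
      rw [← Finset.sum_add_distrib]
      exact Finset.sum_le_sum fun i _ => abs_sub_le (x i) (z i) (y i)
    have htriR : ((∑ i, |x i - y i| : ℤ) : ℝ) ≤
        ((∑ i, |x i - z i| : ℤ) : ℝ) + ((∑ i, |z i - y i| : ℤ) : ℝ) := by
      exact_mod_cast htriZ
    set n : ℝ := ((∑ i, |x i - z i| : ℤ) : ℝ) with hn_def
    set m : ℝ := ((∑ i, |z i - y i| : ℤ) : ℝ) with hm_def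
    set N : ℝ := ((∑ i, |x i - y i| : ℤ) : ℝ) with hN_def
    have htri : N ≤ n + m := htriR
    have hn : 0 ≤ n := hNnn x z
    have hm : 0 ≤ m := hNnn z y
    have hN : 0 ≤ N := hNnn x y
    have hexp : Real.exp (-μ * n) * Real.exp (-μ * m) ≤ Real.exp (-μ * N) := by
      rw [← Real.exp_add]
      apply Real.exp_le_exp.mpr
      nlinarith
    have hpoly := aux_key_poly hβ0 hn hm hN htri
    have hgx : g (x - z) = (1 + n) ^ (-β) := by
      simp only [hg_def, Pi.sub_apply, hn_def]
    have hgy : g (z - y) = (1 + m) ^ (-β) := by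
      simp only [hg_def, Pi.sub_apply, hm_def]
    rw [hf x z, hf z y, hf x y, hgx, hgy]
    have hE1 : (0:ℝ) ≤ Real.exp (-μ * n) * Real.exp (-μ * m) := by positivity
    have hQ : (0:ℝ) ≤ (1 + n) ^ (-β) * (1 + m) ^ (-β) :=
      mul_nonneg (Real.rpow_nonneg (by linarith) _) (Real.rpow_nonneg (by linarith) _)
    calc Real.exp (-μ * n) * (1 + n) ^ (-β) * (Real.exp (-μ * m) * (1 + m) ^ (-β))
        = (Real.exp (-μ * n) * Real.exp (-μ * m)) * ((1 + n) ^ (-β) * (1 + m) ^ (-β)) := by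
          ring
      _ ≤ Real.exp (-μ * N) * (2 ^ β * (1 + N) ^ (-β) * ((1 + n) ^ (-β) + (1 + m) ^ (-β))) := by
          apply mul_le_mul hexp hpoly hQ (Real.exp_nonneg _)
      _ = (2 ^ β * (Real.exp (-μ * N) * (1 + N) ^ (-β))) *
            ((1 + n) ^ (-β) + (1 + m) ^ (-β)) := by ring
  -- summability of the majorant
  have hS1 : Summable (fun z : Fin d → ℤ => g (x - z)) :=
    ((Equiv.subLeft x).summable_iff (f := g)).2 hg_summable
  have hS2 : Summable (fun z : Fin d → ℤ => g (z - y)) :=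
    ((Equiv.subRight y).summable_iff (f := g)).2 hg_summable
  have hSb : Summable (fun z : Fin d → ℤ =>
      (2 ^ β * f x y) * (g (x - z) + g (z - y))) := (hS1.add hS2).mul_left _
  have hSf : Summable (fun z : Fin d → ℤ => f x z * f z y) :=
    Summable.of_nonneg_of_le (fun z => mul_nonneg (hf_nonneg _ _) (hf_nonneg _ _)) hbound hSb
  refine ⟨hSf, ?_⟩
  have hle := Summable.tsum_le_tsum hbound hSf hSb
  have htsum : (∑' z : Fin d → ℤ, (2 ^ β * f x y) * (g (x - z) + g (z - y)))
      = (2 ^ β * f x y) * (2 * C) := by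
    rw [tsum_mul_left, Summable.tsum_add hS1 hS2]
    have e1 : (∑' z : Fin d → ℤ, g (x - z)) = C := (Equiv.subLeft x).tsum_eq g
    have e2 : (∑' z : Fin d → ℤ, g (z - y)) = C := (Equiv.subRight y).tsum_eq g
    rw [e1, e2]; ring
  rw [htsum] at hle
  refine hle.trans ?_
  have := hf_nonneg x y
  nlinarith [mul_nonneg h2β.le this]
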